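/- arXiv:math/0611270 — 3 statements merged into one kernel-verified Lean document; each statement's English description precedes it below -/
import Mathlib

section
/- The greatest convex minorant operator is nonexpansive in the sup norm: for functions h, r : O → ℝ with h and h + r bounded below on an interval O, sup_{t ∈ O} |T_O(h + r)(t) − T_O(h)(t)| ≤ sup_{t ∈ O} |r(t)|. -/
open Set

noncomputable def gcm (O : Set ℝ) (x : ℝ → ℝ) (t : ℝ) : ℝ :=
  sSup {v : ℝ | ∃ z : ℝ → ℝ, ConvexOn ℝ O z ∧ (∀ s ∈ O, z s ≤ x s) ∧ v = z t}

lemma gcm_set_nonempty (O : Set ℝ) (hO : Convex ℝ O) (x : ℝ → ℝ)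
    (hbdd : ∃ m : ℝ, ∀ t ∈ O, m ≤ x t) (t : ℝ) :
    {v : ℝ | ∃ z : ℝ → ℝ, ConvexOn ℝ O z ∧ (∀ s ∈ O, z s ≤ x s) ∧ v = z t}.Nonempty := by
  obtain ⟨m, hm⟩ := hbdd
  exact ⟨m, fun _ => m, convexOn_const m hO, fun s hs => hm s hs, rfl⟩

lemma gcm_set_bddAbove (O : Set ℝ) (x : ℝ → ℝ) (t : ℝ) (ht : t ∈ O) :
    BddAbove {v : ℝ | ∃ z : ℝ → ℝ, ConvexOn ℝ O z ∧ (∀ s ∈ O, z s ≤ x s) ∧ v = z t} := by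
  refine ⟨x t, fun v hv => ?_⟩
  obtain ⟨z, _, hz, rfl⟩ := hv
  exact hz t ht

lemma gcm_shift_le (O : Set ℝ) (hO : Convex ℝ O) (x y : ℝ → ℝ) (C : ℝ)
    (hxy : ∀ s ∈ O, x s - C ≤ y s)
    (hbdd : ∃ m : ℝ, ∀ t ∈ O, m ≤ x t) (t : ℝ) (ht : t ∈ O) :
    gcm O x t - C ≤ gcm O y t := by
  rw [sub_le_iff_le_add]
  apply csSup_le (gcm_set_nonempty O hO x hbdd t)
  rintro v ⟨z, hzc, hzle, rfl⟩
  have hmem : z t - C ∈ {v : ℝ | ∃ w : ℝ → ℝ, ConvexOn ℝ O w ∧ (∀ s ∈ O, w s ≤ y s) ∧ v = w t} := by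
    refine ⟨fun s => z s - C, ?_, fun s hs => ?_, rfl⟩
    · exact hzc.sub (concaveOn_const C hO)
    · dsimp only; exact le_trans (by linarith [hzle s hs]) (hxy s hs)
  have := le_csSup (gcm_set_bddAbove O y t ht) hmem
  unfold gcm
  linarith

/-- The greatest convex minorant operator is nonexpansive in the sup norm: if
`|r| ≤ C` on `O` then `|T_O(h+r) - T_O(h)| ≤ C` on `O`. -/
theorem gcm_nonexpansive (O : Set ℝ) (hO : Convex ℝ O) (h r : ℝ → ℝ)
    (hbdd₁ : ∃ m : ℝ, ∀ t ∈ O, m ≤ h t)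
    (hbdd₂ : ∃ m : ℝ, ∀ t ∈ O, m ≤ h t + r t)
    (C : ℝ) (hC : ∀ t ∈ O, |r t| ≤ C) :
    ∀ t ∈ O, |gcm O (fun s => h s + r s) t - gcm O h t| ≤ C := by
  intro t ht
  have h1 : gcm O h t - C ≤ gcm O (fun s => h s + r s) t := by
    apply gcm_shift_le O hO h (fun s => h s + r s) C (fun s hs => ?_) hbdd₁ t ht
    have := abs_le.mp (hC s hs)
    linarith [this.1]
  have h2 : gcm O (fun s => h s + r s) t - C ≤ gcm O h t := by
    apply gcm_shift_le O hO (fun s => h s + r s) h C (fun s hs => ?_) hbdd₂ t ht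
    have := abs_le.mp (hC s hs)
    linarith [this.2]
  rw [abs_le]
  constructor <;> linarith
end

section
/- Let (g_n) be a sequence of convex functions on ℝ with g_n(0) = 0 for all n, and suppose that for a constant A > 0 and p > 1, sup_{|s| ≤ c} |g_n(s) − A|s|^p| → 0 as n → ∞ for every c > 0. Then for every κ > 0 there exists τ < ∞ such that liminf_{n→∞} inf_{|s| ≥ τ} (g_n(s) − κ|s|) ≥ 0. -/
open Set

/-- If convex functions `g n` with `g n 0 = 0` converge uniformly on compacts to
`s ↦ A|s|^p` with `A > 0`, `p > 1`, then for every `κ > 0` there is `τ` with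
`liminf_n inf_{|s| ≥ τ} (g n s - κ|s|) ≥ 0`. -/
theorem convex_linear_lower_bound (g : ℕ → ℝ → ℝ)
    (hconv : ∀ n, ConvexOn ℝ Set.univ (g n)) (h0 : ∀ n, g n 0 = 0)
    (A p : ℝ) (hA : 0 < A) (hp : 1 < p)
    (hconvg : ∀ c > (0 : ℝ), ∀ ε > (0 : ℝ), ∃ N : ℕ, ∀ n ≥ N, ∀ s : ℝ,
      |s| ≤ c → |g n s - A * |s| ^ p| ≤ ε) :
    ∀ κ > (0 : ℝ), ∃ τ : ℝ, ∀ ε > (0 : ℝ), ∃ N : ℕ, ∀ n ≥ N, ∀ s : ℝ,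
      τ ≤ |s| → -ε ≤ g n s - κ * |s| := by
  intro κ hκ
  have hp1 : (0:ℝ) < p - 1 := by linarith
  set τ : ℝ := max 1 ((2*κ/A) ^ (1/(p-1))) with hτdef
  have hτ1 : (1:ℝ) ≤ τ := le_max_left _ _
  have hτ0 : (0:ℝ) < τ := lt_of_lt_of_le one_pos hτ1
  have hbase : (0:ℝ) ≤ 2*κ/A := by positivity
  have hτpow : 2*κ/A ≤ τ ^ (p-1) := by
    have hb : (2*κ/A) ^ (1/(p-1)) ≤ τ := le_max_right _ _
    have h2 := Real.rpow_le_rpow (Real.rpow_nonneg hbase _) hb (le_of_lt hp1)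
    rwa [← Real.rpow_mul hbase, one_div_mul_cancel hp1.ne', Real.rpow_one] at h2
  have hkey : 2*κ*τ ≤ A * τ ^ p := by
    have h1 : τ ^ (p-1) * τ = τ ^ p := by
      rw [← Real.rpow_add_one hτ0.ne' (p-1)]; norm_num
    have h2 : (2*κ/A) * τ ≤ τ ^ (p-1) * τ :=
      mul_le_mul_of_nonneg_right hτpow hτ0.le
    have h3 : A * ((2*κ/A) * τ) ≤ A * (τ ^ (p-1) * τ) :=
      mul_le_mul_of_nonneg_left h2 hA.le
    rw [h1] at h3
    have h4 : A * ((2*κ/A) * τ) = 2*κ*τ := by field_simp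
    linarith
  obtain ⟨N, hN⟩ := hconvg τ hτ0 κ hκ
  refine ⟨τ, fun ε hε => ⟨N, fun n hn s hs => ?_⟩⟩
  have hs0 : (0:ℝ) < |s| := lt_of_lt_of_le hτ0 hs
  set t : ℝ := |s| / τ with htdef
  have ht1 : 1 ≤ t := (one_le_div hτ0).2 hs
  have ht0 : (0:ℝ) < t := lt_of_lt_of_le one_pos ht1
  have hst : |s| = t * τ := by rw [htdef, div_mul_cancel₀ _ hτ0.ne']
  set x : ℝ := s / t with hxdef
  have hxabs : |x| = τ := by
    rw [hxdef, abs_div, abs_of_pos ht0, htdef]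
    field_simp
  -- convexity: g n x ≤ (1/t) * g n s
  have hconvx : g n x ≤ (1/t) * g n s := by
    have ha : (0:ℝ) ≤ 1/t := by positivity
    have hb : (0:ℝ) ≤ 1 - 1/t := by
      have : 1/t ≤ 1 := by
        rw [div_le_one ht0]; exact ht1
      linarith
    have hab : 1/t + (1 - 1/t) = 1 := by ring
    have := (hconv n).2 (Set.mem_univ s) (Set.mem_univ 0) ha hb hab
    simp only [smul_eq_mul, mul_zero, add_zero, h0 n, mul_zero] at this
    have hx : (1/t) * s = x := by rw [hxdef]; ring
    rw [hx] at this
    linarith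
  have hgx : κ * τ ≤ g n x := by
    have hb := hN n hn x (le_of_eq hxabs)
    rw [hxabs] at hb
    have := abs_le.1 hb
    have hκτ : κ ≤ κ * τ := le_mul_of_one_le_right hκ.le hτ1
    linarith
  -- conclude
  have hmain : t * g n x ≤ g n s := by
    have h6 := mul_le_mul_of_nonneg_left hconvx ht0.le
    have heq : t * (1/t * g n s) = g n s := by
      field_simp
    linarith
  have h5 : t * (κ * τ) ≤ t * g n x := mul_le_mul_of_nonneg_left hgx ht0.le
  have : κ * |s| ≤ g n s := by
    rw [hst]; nlinarith
  linarith
end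

section
/- Let φ denote the standard Gaussian density, F a distribution function, g measurable, and for k ≥ 1 let η_k(t) = ∫ (1_{g(u) ≤ t} − F(t)) h_k(u) φ(u) du, where h_k is the k-th Hermite polynomial with ∫ h_k² φ = k!. Then for any t₀ and δ > 0, (η_k(t₀+δ) − η_k(t₀))² ≤ k! · (F(t₀+δ) − F(t₀)), provided F is the distribution function of g(ξ) with ξ standard Gaussian. -/
open Set MeasureTheory Polynomial Filter Topology

namespace HermiteAux

noncomputable def E (x : ℝ) : ℝ := Real.exp (-x ^ 2 / 2)

lemma E_pos (x : ℝ) : 0 < E x := Real.exp_pos _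

lemma tendsto_atTop (p : ℝ[X]) : Tendsto (fun x => p.eval x * E x) atTop (𝓝 0) := by
  have h := (Polynomial.tendsto_div_exp_atTop p).abs
  rw [abs_zero] at h
  apply squeeze_zero_norm' _ h
  filter_upwards [eventually_ge_atTop (2:ℝ)] with x hx
  have hx0 : (0:ℝ) < x := by linarith
  have h1 : E x ≤ Real.exp (-x) := by
    apply Real.exp_le_exp.2
    nlinarith
  have : ‖p.eval x * E x‖ = |p.eval x| * E x := by
    rw [norm_mul, Real.norm_eq_abs, Real.norm_eq_abs, abs_of_pos (E_pos x)]
  rw [this, abs_div, Real.abs_exp, Real.exp_neg] at *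
  rw [div_eq_mul_inv]
  exact mul_le_mul_of_nonneg_left h1 (abs_nonneg _)

lemma tendsto_atBot (p : ℝ[X]) : Tendsto (fun x => p.eval x * E x) atBot (𝓝 0) := by
  have h := (tendsto_atTop (p.comp (-X))).comp tendsto_neg_atBot_atTop
  apply h.congr
  intro x
  simp [Function.comp, E, neg_pow, Polynomial.eval_comp]

lemma integrable_pow (n : ℕ) : Integrable fun x : ℝ => x ^ n * E x := by
  have h := integrable_rpow_mul_exp_neg_mul_sq (b := 1/2) one_half_pos
    (s := (n:ℝ)) (lt_of_lt_of_le neg_one_lt_zero (Nat.cast_nonneg n))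
  apply h.congr
  filter_upwards with x
  rw [Real.rpow_natCast, E]
  ring_nf

lemma integrable_poly (p : ℝ[X]) : Integrable fun x => p.eval x * E x := by
  induction p using Polynomial.induction_on' with
  | add p q hp hq => simpa [add_mul] using (hp.add hq : Integrable (fun x => eval x p * E x + eval x q * E x))
  | monomial n a =>
    apply ((integrable_pow n).const_mul a).congr
    filter_upwards with x
    simp [Polynomial.eval_monomial]; ring


noncomputable def Hp (n : ℕ) : ℝ[X] := (Polynomial.hermite n).map (Int.castRingHom ℝ)

lemma Hp_zero : Hp 0 = 1 := by simp [Hp, Hp_zero]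

lemma Hp_succ (n : ℕ) : Hp (n + 1) = X * Hp n - derivative (Hp n) := by
  simp only [Hp, hermite_succ, Polynomial.map_sub, Polynomial.map_mul, Polynomial.map_X,
    Polynomial.derivative_map]

lemma Hp_natDegree (n : ℕ) : (Hp n).natDegree = n := by
  rw [Hp, (hermite_monic n).natDegree_map, Polynomial.natDegree_hermite]

lemma Hp_coeff_self (n : ℕ) : (Hp n).coeff n = 1 := by
  simp [Hp, Polynomial.coeff_map, Polynomial.coeff_hermite_self]

lemma aeval_eq_Hp (n : ℕ) (x : ℝ) : (Polynomial.aeval x (Polynomial.hermite n) : ℝ) = (Hp n).eval x := by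
  rw [Polynomial.aeval_def, Polynomial.eval₂_eq_eval_map]
  rfl

lemma hasDerivAt_E (x : ℝ) : HasDerivAt E (-x * E x) x := by
  have h1 : HasDerivAt (fun y : ℝ => -y ^ 2 / 2) (-x) x := by
    have := ((hasDerivAt_pow 2 x).neg).div_const 2
    refine this.congr_deriv ?_
    simp; ring
  have h2 := h1.exp
  refine h2.congr_deriv ?_
  rw [E]; ring

lemma hasDerivAt_poly_E (q : ℝ[X]) (x : ℝ) :
    HasDerivAt (fun y => q.eval y * E y)
      ((derivative q).eval x * E x - x * (q.eval x * E x)) x := by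
  have := (q.hasDerivAt x).mul (hasDerivAt_E x)
  refine this.congr_deriv ?_
  ring

lemma integral_deriv_eq_zero {f f' : ℝ → ℝ} (hd : ∀ x, HasDerivAt f (f' x) x)
    (hi : Integrable f') (ht : Tendsto f atTop (𝓝 0)) (hb : Tendsto f atBot (𝓝 0)) :
    ∫ x, f' x = 0 := by
  have h1 : ∫ x in Iic (0:ℝ), f' x = f 0 - 0 :=
    integral_Iic_of_hasDerivAt_of_tendsto' (fun x _ => hd x) hi.integrableOn hb
  have h2 : ∫ x in Ioi (0:ℝ), f' x = 0 - f 0 :=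
    integral_Ioi_of_hasDerivAt_of_tendsto' (fun x _ => hd x) hi.integrableOn ht
  rw [← intervalIntegral.integral_Iic_add_Ioi (b := (0:ℝ)) hi.integrableOn hi.integrableOn, h1, h2]
  ring

lemma step (p : ℝ[X]) (n : ℕ) :
    ∫ x, p.eval x * (Hp (n+1)).eval x * E x
      = ∫ x, (derivative p).eval x * (Hp n).eval x * E x := by
  have e1 : Integrable fun x => (derivative p).eval x * (Hp n).eval x * E x := by
    simpa only [eval_mul] using integrable_poly (derivative p * Hp n)
  have e2 : Integrable fun x => p.eval x * (Hp (n+1)).eval x * E x := by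
    simpa only [eval_mul] using integrable_poly (p * Hp (n+1))
  have key : ∫ x, ((derivative p).eval x * (Hp n).eval x * E x
      - p.eval x * (Hp (n+1)).eval x * E x) = 0 := by
    apply integral_deriv_eq_zero (f := fun x => (p * Hp n).eval x * E x)
    · intro x
      have h := hasDerivAt_poly_E (p * Hp n) x
      convert h using 1
      simp only [derivative_mul, eval_mul, eval_add, Hp_succ, eval_sub, eval_X]
      ring
    · exact e1.sub e2
    · exact tendsto_atTop _
    · exact tendsto_atBot _
  rw [integral_sub e1 e2] at key
  linarith

lemma iter (n : ℕ) : ∀ p : ℝ[X],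
    ∫ x, p.eval x * (Hp n).eval x * E x = ∫ x, (derivative^[n] p).eval x * E x := by
  induction n with
  | zero => intro p; simp [Hp_zero]
  | succ n ih =>
    intro p
    rw [step p n, ih (derivative p), Function.iterate_succ_apply]

lemma integral_hermite_zero {k : ℕ} (hk : 1 ≤ k) : ∫ x, (Hp k).eval x * E x = 0 := by
  have h := iter k 1
  simp only [eval_one, one_mul] at h
  rw [h]
  obtain ⟨m, rfl⟩ : ∃ m, k = m + 1 := ⟨k - 1, (Nat.succ_pred_eq_of_pos hk).symm⟩
  simp [Function.iterate_succ_apply]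

lemma integral_E : ∫ x, E x = Real.sqrt (2 * Real.pi) := by
  have h := integral_gaussian (1/2)
  rw [show Real.pi / (1/2) = 2 * Real.pi by ring] at h
  rw [← h]
  congr 1
  funext x
  rw [E]
  ring_nf

lemma integral_hermite_sq (k : ℕ) :
    ∫ x, (Hp k).eval x * (Hp k).eval x * E x
      = (k.factorial : ℝ) * Real.sqrt (2 * Real.pi) := by
  rw [iter k (Hp k)]
  have hd : derivative^[k] (Hp k) = C (k.factorial : ℝ) := by
    have hdeg : (derivative^[k] (Hp k)).natDegree ≤ 0 := by
      have h := Polynomial.natDegree_iterate_derivative (Hp k) k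
      simpa [Hp_natDegree] using h
    rw [Polynomial.eq_C_of_natDegree_le_zero hdeg]
    congr 1
    rw [Polynomial.coeff_iterate_derivative]
    simp [Nat.descFactorial_self, Hp_coeff_self]
  rw [hd]
  simp only [eval_C]
  rw [MeasureTheory.integral_const_mul, integral_E]

lemma cauchy_schwarz {f g : ℝ → ℝ} (hf : Integrable fun x => f x ^ 2)
    (hg : Integrable fun x => g x ^ 2) (hfg : Integrable fun x => f x * g x) :
    (∫ x, f x * g x) ^ 2 ≤ (∫ x, f x ^ 2) * ∫ x, g x ^ 2 := by
  set A := ∫ x, f x ^ 2 with hA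
  set B := ∫ x, f x * g x with hB
  set C := ∫ x, g x ^ 2 with hC
  have key : ∀ t : ℝ, 0 ≤ A * (t * t) + (2 * B) * t + C := by
    intro t
    have h0 : 0 ≤ ∫ x, (t * f x + g x) ^ 2 := integral_nonneg fun x => sq_nonneg _
    have hexp : ∫ x, (t * f x + g x) ^ 2 = A * (t * t) + (2 * B) * t + C := by
      have hfun : (fun x => (t * f x + g x) ^ 2)
          = fun x => (t * t) * f x ^ 2 + (2 * t) * (f x * g x) + g x ^ 2 := by
        funext x; ring
      have i1 : Integrable (fun x => (t * t) * f x ^ 2) volume := hf.const_mul _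
      have i2 : Integrable (fun x => (2 * t) * (f x * g x)) volume := hfg.const_mul _
      have i12 : Integrable (fun x => (t * t) * f x ^ 2 + (2 * t) * (f x * g x)) volume := i1.add i2
      rw [hfun, integral_add i12 hg, integral_add i1 i2,
        MeasureTheory.integral_const_mul, MeasureTheory.integral_const_mul]
      ring
    linarith [hexp ▸ h0]
  have hd := discrim_le_zero key
  rw [discrim] at hd
  nlinarith [hd]

end HermiteAux


open HermiteAux in
/-- Increment bound for Hermite coefficients of indicator functions:
`(η_k(t₀+δ) - η_k(t₀))² ≤ k! (F(t₀+δ) - F(t₀))`, where `F` is the distribution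
function of `g(ξ)` with `ξ` standard Gaussian and `h_k` the k-th Hermite polynomial. -/
theorem hermite_coeff_increment_bound (g : ℝ → ℝ) (hg : Measurable g)
    (F : ℝ → ℝ)
    (hF : ∀ t : ℝ, F t =
      ∫ u : ℝ, (if g u ≤ t then (1 : ℝ) else 0) *
        (Real.exp (-u ^ 2 / 2) / Real.sqrt (2 * Real.pi)))
    (k : ℕ) (hk : 1 ≤ k)
    (η : ℝ → ℝ)
    (hη : ∀ t : ℝ, η t =
      ∫ u : ℝ, ((if g u ≤ t then (1 : ℝ) else 0) - F t) *
        (Polynomial.aeval u (Polynomial.hermite k)) *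
        (Real.exp (-u ^ 2 / 2) / Real.sqrt (2 * Real.pi)))
    (t₀ δ : ℝ) (hδ : 0 < δ) :
    (η (t₀ + δ) - η t₀) ^ 2 ≤ (k.factorial : ℝ) * (F (t₀ + δ) - F t₀) := by
  classical
  have hcpos : (0:ℝ) < Real.sqrt (2 * Real.pi) := Real.sqrt_pos.2 (by positivity)
  set c : ℝ := Real.sqrt (2 * Real.pi) with hc
  set q : ℝ → ℝ := fun x => E x / c with hqdef
  have hq0 : ∀ x, 0 ≤ q x := fun x => le_of_lt (div_pos (E_pos x) hcpos)
  set H : ℝ → ℝ := fun x => (Hp k).eval x with hHdef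
  -- basic integrability
  have iE : Integrable E := by simpa using integrable_poly 1
  have iq : Integrable q := iE.div_const c
  have iHq : Integrable (fun x => H x * q x) := by
    have := (integrable_poly (Hp k)).div_const c
    apply this.congr
    filter_upwards with x
    rw [mul_div_assoc]
  have iH2q : Integrable (fun x => H x * H x * q x) := by
    have := (integrable_poly (Hp k * Hp k)).div_const c
    apply this.congr
    filter_upwards with x
    simp only [Polynomial.eval_mul]
    rw [mul_div_assoc]
  -- indicator functions
  set ind : ℝ → ℝ → ℝ := fun t x => if g x ≤ t then (1:ℝ) else 0 with hind
  have mInd : ∀ t, Measurable (ind t) := fun t =>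
    Measurable.ite (measurableSet_le hg measurable_const) measurable_const measurable_const
  have bInd : ∀ t x, ‖ind t x‖ ≤ 1 := by
    intro t x
    simp only [hind]
    split <;> simp
  have iIndq : ∀ t, Integrable (fun x => ind t x * q x) := fun t =>
    iq.bdd_mul (mInd t).aestronglyMeasurable (ae_of_all _ (bInd t))
  have iIndHq : ∀ t, Integrable (fun x => ind t x * (H x * q x)) := fun t =>
    iHq.bdd_mul (mInd t).aestronglyMeasurable (ae_of_all _ (bInd t))
  -- ∫ H q = 0
  have hHq0 : ∫ x, H x * q x = 0 := by
    have : (fun x => H x * q x) = fun x => (H x * E x) / c := by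
      funext x; rw [hqdef, mul_div_assoc]
    rw [this, integral_div, integral_hermite_zero hk, zero_div]
  -- ∫ H H q = k!
  have hHHq : ∫ x, H x * H x * q x = (k.factorial : ℝ) := by
    have : (fun x => H x * H x * q x) = fun x => (H x * H x * E x) / c := by
      funext x; rw [hqdef, mul_div_assoc]
    rw [this, integral_div, integral_hermite_sq k, ← hc, mul_div_assoc, div_self (ne_of_gt hcpos),
      mul_one]
  -- η t = ∫ ind t * H * q
  have hηeq : ∀ t, η t = ∫ x, ind t x * (H x * q x) := by
    intro t
    rw [hη t]
    have hfun : (fun u => ((if g u ≤ t then (1:ℝ) else 0) - F t) *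
        (Polynomial.aeval u (Polynomial.hermite k)) *
        (Real.exp (-u ^ 2 / 2) / Real.sqrt (2 * Real.pi)))
        = fun x => ind t x * (H x * q x) - F t * (H x * q x) := by
      funext x
      rw [aeval_eq_Hp]
      show ((ind t x) - F t) * H x * q x = _
      ring
    rw [hfun, integral_sub (iIndHq t) (iHq.const_mul (F t)),
      MeasureTheory.integral_const_mul, hHq0, mul_zero, sub_zero]
  -- F increment
  have hFdiff : F (t₀ + δ) - F t₀ = ∫ x, (ind (t₀ + δ) x - ind t₀ x) * q x := by
    have h1 : F (t₀ + δ) = ∫ x, ind (t₀ + δ) x * q x := hF (t₀ + δ)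
    have h2 : F t₀ = ∫ x, ind t₀ x * q x := hF t₀
    rw [h1, h2, ← integral_sub (iIndq _) (iIndq _)]
    congr 1; funext x; ring
  -- η increment
  have hηdiff : η (t₀ + δ) - η t₀ = ∫ x, (ind (t₀ + δ) x - ind t₀ x) * (H x * q x) := by
    rw [hηeq (t₀ + δ), hηeq t₀, ← integral_sub (iIndHq _) (iIndHq t₀)]
    congr 1; funext x; ring
  set χ : ℝ → ℝ := fun x => ind (t₀ + δ) x - ind t₀ x with hχ
  have hχ01 : ∀ x, χ x = 0 ∨ χ x = 1 := by
    intro x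
    simp only [hχ, hind]
    by_cases h1 : g x ≤ t₀
    · left; rw [if_pos h1, if_pos (le_trans h1 (by linarith))]; ring
    · by_cases h2 : g x ≤ t₀ + δ
      · right; rw [if_pos h2, if_neg h1]; ring
      · left; rw [if_neg h1, if_neg h2]; ring
  have hχsq : ∀ x, χ x ^ 2 = χ x := by
    intro x; rcases hχ01 x with h | h <;> rw [h] <;> ring
  have mχ : Measurable χ := (mInd (t₀ + δ)).sub (mInd t₀)
  have bχ : ∀ x, ‖χ x‖ ≤ 1 := by
    intro x; rcases hχ01 x with h | h <;> simp [h]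
  have iχq : Integrable (fun x => χ x * q x) :=
    iq.bdd_mul mχ.aestronglyMeasurable (ae_of_all _ bχ)
  have iχHq : Integrable (fun x => χ x * (H x * q x)) :=
    iHq.bdd_mul mχ.aestronglyMeasurable (ae_of_all _ bχ)
  -- Cauchy-Schwarz
  set f : ℝ → ℝ := fun x => χ x * Real.sqrt (q x) with hf
  set G : ℝ → ℝ := fun x => H x * Real.sqrt (q x) with hG
  have hsq : ∀ x, Real.sqrt (q x) * Real.sqrt (q x) = q x := fun x => Real.mul_self_sqrt (hq0 x)
  have ef2 : (fun x => f x ^ 2) = fun x => χ x * q x := by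
    funext x
    rw [hf]
    show (χ x * Real.sqrt (q x)) ^ 2 = _
    rw [show (χ x * Real.sqrt (q x)) ^ 2 = χ x ^ 2 * (Real.sqrt (q x) * Real.sqrt (q x)) by ring,
      hsq, hχsq]
  have eG2 : (fun x => G x ^ 2) = fun x => H x * H x * q x := by
    funext x
    show (H x * Real.sqrt (q x)) ^ 2 = _
    rw [show (H x * Real.sqrt (q x)) ^ 2 = H x * H x * (Real.sqrt (q x) * Real.sqrt (q x)) by ring,
      hsq]
  have efG : (fun x => f x * G x) = fun x => χ x * (H x * q x) := by
    funext x
    show χ x * Real.sqrt (q x) * (H x * Real.sqrt (q x)) = _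
    rw [show χ x * Real.sqrt (q x) * (H x * Real.sqrt (q x))
        = χ x * (H x * (Real.sqrt (q x) * Real.sqrt (q x))) by ring, hsq]
  have hCS := cauchy_schwarz (f := f) (g := G) (ef2 ▸ iχq) (eG2 ▸ iH2q) (efG ▸ iχHq)
  rw [efG, ef2, eG2] at hCS
  rw [hηdiff, hFdiff]
  calc (∫ x, χ x * (H x * q x)) ^ 2
      ≤ (∫ x, χ x * q x) * ∫ x, H x * H x * q x := hCS
    _ = (k.factorial : ℝ) * ∫ x, χ x * q x := by rw [hHHq]; ring
end
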